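/- Let W be a type of passwords, S a type of salts, and Y a type of hash values, and let H : W × S → Y be a hash function such that for every salt s, the map w ↦ H(w,s) is injective. Let A be a finite multiset of passwords with o(w,A) the multiplicity of w in A, supp(A) its set of distinct elements, and |A| its total cardinality with multiplicity. Let B be a finite list of (password, salt) pairs, let B_plain be the multiset of password components of B, let B_h be the list of pairs (H(w,s), s) for (w,s) in B, let |B_h| be the length of B_h, and define g(w, B_h) = the number of entries (y,s) of B_h with y = H(w,s). Define F_min(A, B_h) = Σ_{w ∈ supp(A)} min(o(w,A), g(w,B_h)), and define the generalized Jaccard index J(A, B_plain) = (Σ_{w ∈ supp(A) ∪ supp(B_plain)} min(o(w,A), o(w,B_plain))) / (Σ_{w ∈ supp(A) ∪ supp(B_plain)} max(o(w,A), o(w,B_plain))). Then, provided A and B are not both empty, J(A, B_plain) = F_min(A, B_h) / (|A| + |B_h| − F_min(A, B_h)). -/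
import Mathlib


/-- Proposition 1: under per-salt injectivity of the hash `H`, the generalized
Jaccard index between a plaintext training multiset `A` and the multiset
`B_plain` of plaintext passwords of a salted & hashed database `B` equals
`F_min(A, B_h) / (|A| + |B_h| − F_min(A, B_h))`, where
`F_min(A, B_h) = Σ_{w ∈ supp(A)} min(o(w,A), g(w,B_h))` is computable from
`A` and the hashed database `B_h` alone. -/
theorem gen_jaccard_of_hashed {W S Y : Type*} [DecidableEq W] [DecidableEq Y]
    (H : W × S → Y) (hinj : ∀ s : S, Function.Injective fun w : W => H (w, s))
    (A : Multiset W) (B : List (W × S))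
    (Bplain : Multiset W) (hBplain : Bplain = (B.map Prod.fst : List W))
    (Bh : List (Y × S)) (hBh : Bh = B.map fun p => (H p, p.2))
    (g : W → ℕ)
    (hg : ∀ w : W, g w = (Bh.filter fun q : Y × S => q.1 = H (w, q.2)).length)
    (Fmin : ℕ) (hFmin : Fmin = ∑ w ∈ A.toFinset, min (A.count w) (g w))
    (hne : ¬(A = 0 ∧ B = [])) :
    ((∑ w ∈ A.toFinset ∪ Bplain.toFinset, min (A.count w) (Bplain.count w) : ℕ) : ℝ) /
      ((∑ w ∈ A.toFinset ∪ Bplain.toFinset, max (A.count w) (Bplain.count w) : ℕ) : ℝ) =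
      (Fmin : ℝ) / ((Multiset.card A : ℝ) + (Bh.length : ℝ) - (Fmin : ℝ)) := by
  -- Step 1: g w = Bplain.count w
  have hgc : ∀ w, g w = Bplain.count w := by
    intro w
    rw [hg, hBh, hBplain, Multiset.coe_count, ← List.countP_eq_length_filter,
      List.countP_map, List.count_eq_countP, List.countP_map]
    apply List.countP_congr
    intro p _
    simp only [Function.comp_apply, decide_eq_true_eq, beq_iff_eq]
    constructor
    · intro h; exact hinj p.2 (show H (p.1, p.2) = H (w, p.2) by rw [Prod.mk.eta]; exact h)
    · intro h; rw [← h]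
  have hzero : ∀ x ∈ A.toFinset ∪ Bplain.toFinset, x ∉ A.toFinset → A.count x = 0 := by
    intro x _ hx
    exact Multiset.count_eq_zero_of_notMem (by simpa using hx)
  -- Step 2: Fmin equals the min-sum over the union
  have hF : Fmin = ∑ w ∈ A.toFinset ∪ Bplain.toFinset, min (A.count w) (Bplain.count w) := by
    rw [hFmin]
    simp only [hgc]
    apply Finset.sum_subset Finset.subset_union_left
    intro x hx hx'
    rw [hzero x hx hx']
    simp
  -- Step 3: cardinalities
  have hA : ∑ w ∈ A.toFinset ∪ Bplain.toFinset, A.count w = Multiset.card A := by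
    rw [← Multiset.toFinset_sum_count_eq A]
    exact (Finset.sum_subset Finset.subset_union_left hzero).symm
  have hB : ∑ w ∈ A.toFinset ∪ Bplain.toFinset, Bplain.count w = Multiset.card Bplain := by
    rw [← Multiset.toFinset_sum_count_eq Bplain]
    refine (Finset.sum_subset Finset.subset_union_right ?_).symm
    intro x _ hx
    exact Multiset.count_eq_zero_of_notMem (by simpa using hx)
  have hlen : Bh.length = Multiset.card Bplain := by
    rw [hBh, hBplain]
    simp
  have key : (∑ w ∈ A.toFinset ∪ Bplain.toFinset, max (A.count w) (Bplain.count w)) + Fmin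
      = Multiset.card A + Bh.length := by
    rw [hF, hlen, ← hA, ← hB, ← Finset.sum_add_distrib, ← Finset.sum_add_distrib]
    exact Finset.sum_congr rfl fun w _ => max_add_min _ _
  rw [← hF]
  congr 1
  have : (((∑ w ∈ A.toFinset ∪ Bplain.toFinset, max (A.count w) (Bplain.count w) : ℕ) : ℝ) + (Fmin : ℝ))
      = (Multiset.card A : ℝ) + (Bh.length : ℝ) := by exact_mod_cast key
  linarith
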